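/- Define E_{n,k} = (10^{(k+1)(n+1)} - 1)/(10^{k+1} - 1). If n > 1, k > 0, and any of the following holds: (1) n is odd, (2) k is odd, (3) 3 divides n+1, (4) gcd(n+1, k+1) = 1, then E_{n,k} is composite (not prime). -/

import Mathlib

def E (n k : ℕ) : ℕ := (10 ^ ((k + 1) * (n + 1)) - 1) / (10 ^ (k + 1) - 1)

private lemma pow10_dvd {a b : ℕ} (h : a ∣ b) : 10 ^ a - 1 ∣ 10 ^ b - 1 := by
  obtain ⟨c, rfl⟩ := h
  simpa [pow_mul] using Nat.sub_dvd_pow_sub_pow (10 ^ a) 1 c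

private lemma E_mul (n k : ℕ) :
    E n k * (10 ^ (k + 1) - 1) = 10 ^ ((k + 1) * (n + 1)) - 1 :=
  Nat.div_mul_cancel (pow10_dvd ⟨n + 1, rfl⟩)

private lemma pow10_lt {a b : ℕ} (h : a < b) : 10 ^ a - 1 < 10 ^ b - 1 := by
  have h1 := Nat.pow_lt_pow_right (by norm_num : 1 < 10) h
  have h2 : 0 < 10 ^ a := Nat.pow_pos (by norm_num)
  omega

/-- composite `n+1` case -/
private lemma L_comp (n k a b : ℕ) (ha : 2 ≤ a) (hb : 2 ≤ b) (hab : n + 1 = a * b) :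
    ¬ (E n k).Prime := by
  have hB : 0 < 10 ^ (k + 1) - 1 := by
    have : (10:ℕ) ^ 1 ≤ 10 ^ (k+1) := Nat.pow_le_pow_right (by norm_num) (by omega)
    simp at this; omega
  set B := 10 ^ (k + 1) - 1 with hBdef
  set A := 10 ^ ((k + 1) * a) - 1 with hAdef
  set T := 10 ^ ((k + 1) * (n + 1)) - 1 with hTdef
  have hd : A / B * B = A := Nat.div_mul_cancel (pow10_dvd ⟨a, rfl⟩)
  have he : T / A * A = T :=
    Nat.div_mul_cancel (pow10_dvd (mul_dvd_mul_left (k+1) ⟨b, hab⟩))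
  have hE := E_mul n k
  have hBA : B < A := pow10_lt (by
    have : k + 1 < (k + 1) * a := (Nat.lt_mul_iff_one_lt_right (by omega)).mpr (by omega)
    omega)
  have hAT : A < T := pow10_lt (by
    have h' : a < n + 1 := by
      have : a < a * b := (Nat.lt_mul_iff_one_lt_right (by omega)).mpr (by omega)
      omega
    exact (mul_lt_mul_iff_right₀ (show 0 < k + 1 by omega)).mpr h')
  have hEeq : E n k = (T / A) * (A / B) := by
    apply Nat.eq_of_mul_eq_mul_right hB
    rw [hE, mul_assoc, hd, he]
  have hd1 : A / B ≠ 1 := by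
    intro h1; rw [h1, one_mul] at hd; omega
  have he1 : T / A ≠ 1 := by
    intro h1; rw [h1, one_mul] at he; omega
  rw [hEeq]
  exact Nat.not_prime_mul he1 hd1

/-- `k+1` even, `n+1` odd case -/
private lemma L_even_m (n k s : ℕ) (hn : 1 < n) (hNodd : Odd (n + 1))
    (hs : k + 1 = 2 * (s + 1)) : ¬ (E n k).Prime := by
  set y := 10 ^ (s + 1) with hydef
  have hy : 10 ≤ y := by
    calc (10:ℕ) = 10 ^ 1 := (pow_one 10).symm
    _ ≤ 10 ^ (s+1) := Nat.pow_le_pow_right (by norm_num) (by omega)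
  have hyN : y < y ^ (n + 1) := by
    calc y = y ^ 1 := (pow_one y).symm
    _ < y ^ (n + 1) := Nat.pow_lt_pow_right (by omega) (by omega)
  -- identities
  have hsq : ∀ c : ℕ, 1 ≤ c → c ^ 2 - 1 = (c - 1) * (c + 1) := by
    intro c hc
    obtain ⟨b, rfl⟩ := Nat.exists_eq_add_of_le hc
    have h1 : 1 + b - 1 = b := by omega
    rw [h1]
    have : (1 + b) ^ 2 = b * (1 + b + 1) + 1 := by ring
    omega
  have hx2 : 10 ^ (k + 1) = y ^ 2 := by rw [hydef, ← pow_mul, hs]; congr 1; ring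
  have hxN : 10 ^ ((k + 1) * (n + 1)) = (y ^ (n+1)) ^ 2 := by
    rw [hydef, ← pow_mul, ← pow_mul, hs]; congr 1; ring
  have hd1 : (y ^ (n+1) - 1) / (y - 1) * (y - 1) = y ^ (n+1) - 1 :=
    Nat.div_mul_cancel (by simpa using Nat.sub_dvd_pow_sub_pow y 1 (n+1))
  have hd2 : (y ^ (n+1) + 1) / (y + 1) * (y + 1) = y ^ (n+1) + 1 :=
    Nat.div_mul_cancel (by simpa using Odd.nat_add_dvd_pow_add_pow y 1 hNodd)
  have hE := E_mul n k
  rw [hx2, hxN, hsq _ (by omega), hsq _ (Nat.one_le_pow _ _ (by omega))] at hE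
  -- hE : E n k * ((y-1)*(y+1)) = (y^(n+1)-1)*(y^(n+1)+1)
  have hEeq : E n k = (y ^ (n+1) - 1) / (y - 1) * ((y ^ (n+1) + 1) / (y + 1)) := by
    apply Nat.eq_of_mul_eq_mul_right (show 0 < (y - 1) * (y + 1) from
      Nat.mul_pos (by omega) (by omega))
    rw [hE]
    symm
    calc (y ^ (n+1) - 1) / (y - 1) * ((y ^ (n+1) + 1) / (y + 1)) * ((y - 1) * (y + 1))
        = ((y ^ (n+1) - 1) / (y - 1) * (y - 1)) * ((y ^ (n+1) + 1) / (y + 1) * (y + 1)) := by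
          ring
    _ = (y ^ (n+1) - 1) * (y ^ (n+1) + 1) := by rw [hd1, hd2]
  have h1 : (y ^ (n+1) - 1) / (y - 1) ≠ 1 := by
    intro h; rw [h, one_mul] at hd1; omega
  have h2 : (y ^ (n+1) + 1) / (y + 1) ≠ 1 := by
    intro h; rw [h, one_mul] at hd2; omega
  rw [hEeq]
  exact Nat.not_prime_mul h1 h2

/-- `n = 2` case: `3 ∣ E` -/
private lemma L_n2 (k : ℕ) (hk : 0 < k) : ¬ (E 2 k).Prime := by
  set x := 10 ^ (k + 1) with hxdef
  have hx : 100 ≤ x := by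
    calc (100:ℕ) = 10 ^ 2 := by norm_num
    _ ≤ 10 ^ (k+1) := Nat.pow_le_pow_right (by norm_num) (by omega)
  have hE := E_mul 2 k
  have hxc : 10 ^ ((k + 1) * (2 + 1)) = x ^ 3 := by rw [hxdef, ← pow_mul]
  rw [hxc] at hE
  have hid : (x ^ 2 + x + 1) * (x - 1) = x ^ 3 - 1 := by
    have key : ∀ c : ℕ, 1 ≤ c → (c ^ 2 + c + 1) * (c - 1) = c ^ 3 - 1 := by
      intro c hc
      obtain ⟨b, rfl⟩ := Nat.exists_eq_add_of_le hc
      have h1 : 1 + b - 1 = b := by omega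
      rw [h1]
      have : ((1 + b) ^ 2 + (1 + b) + 1) * b + 1 = (1 + b) ^ 3 := by ring
      omega
    exact key x (by omega)
  have hEeq : E 2 k = x ^ 2 + x + 1 := by
    apply Nat.eq_of_mul_eq_mul_right (show 0 < x - 1 by omega)
    rw [hE, hid]
  have h3x : 3 ∣ x - 1 := by
    have h9 : (9:ℕ) ∣ x - 1 := by
      simpa using Nat.sub_dvd_pow_sub_pow 10 1 (k+1)
    omega
  obtain ⟨t, ht⟩ : ∃ t, x = 3 * t + 1 := by
    obtain ⟨t, ht⟩ := h3x; exact ⟨t, by omega⟩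
  have h3E : 3 ∣ E 2 k := by
    rw [hEeq, ht]
    exact ⟨3 * t ^ 2 + 3 * t + 1, by ring⟩
  intro hp
  rcases hp.eq_one_or_self_of_dvd 3 h3E with h | h
  · omega
  · rw [hEeq] at h; nlinarith

/-- coprime case: `(10^(n+1)-1)/9 ∣ E` -/
private lemma L_cop (n k : ℕ) (hn : 1 < n) (hk : 0 < k)
    (hcop : Nat.gcd (n + 1) (k + 1) = 1) : ¬ (E n k).Prime := by
  set N := n + 1 with hNdef
  set m := k + 1 with hmdef
  have hN3 : 3 ≤ N := by omega
  have hm2 : 2 ≤ m := by omega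
  set A := 10 ^ N - 1 with hAdef
  set B := 10 ^ m - 1 with hBdef
  have hApos : 1000 ≤ 10 ^ N := by
    calc (1000:ℕ) = 10 ^ 3 := by norm_num
    _ ≤ 10 ^ N := Nat.pow_le_pow_right (by norm_num) hN3
  have hBpos : 100 ≤ 10 ^ m := by
    calc (100:ℕ) = 10 ^ 2 := by norm_num
    _ ≤ 10 ^ m := Nat.pow_le_pow_right (by norm_num) hm2
  have h9A : 9 ∣ A := by simpa using Nat.sub_dvd_pow_sub_pow 10 1 N
  have h9B : 9 ∣ B := by simpa using Nat.sub_dvd_pow_sub_pow 10 1 m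
  have hA' : A / 9 * 9 = A := Nat.div_mul_cancel h9A
  have hB' : B / 9 * 9 = B := Nat.div_mul_cancel h9B
  -- gcd A B divides 9
  set g := Nat.gcd A B with hgdef
  have hg9 : g ∣ 9 := by
    have hgA : g ∣ A := Nat.gcd_dvd_left A B
    have hgB : g ∣ B := Nat.gcd_dvd_right A B
    have hN1 : (10 : ZMod g) ^ N = 1 := by
      have : ((A : ℕ) : ZMod g) = 0 := (ZMod.natCast_eq_zero_iff _ _).mpr hgA
      rw [hAdef, Nat.cast_sub (by omega), Nat.cast_pow] at this
      push_cast at this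
      linear_combination this
    have hm1 : (10 : ZMod g) ^ m = 1 := by
      have : ((B : ℕ) : ZMod g) = 0 := (ZMod.natCast_eq_zero_iff _ _).mpr hgB
      rw [hBdef, Nat.cast_sub (by omega), Nat.cast_pow] at this
      push_cast at this
      linear_combination this
    have := pow_gcd_eq_one.mpr ⟨hN1, hm1⟩
    rw [hcop, pow_one] at this
    have h9 : ((9 : ℕ) : ZMod g) = 0 := by push_cast; linear_combination this
    exact (ZMod.natCast_eq_zero_iff _ _).mp h9
  -- gcd (A/9) (B/9) = 1
  have hgc : Nat.Coprime (A / 9) (B / 9) := by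
    have h1 : Nat.gcd (A / 9 * 9) (B / 9 * 9) = Nat.gcd (A / 9) (B / 9) * 9 :=
      Nat.gcd_mul_right _ _ _
    rw [hA', hB', ← hgdef] at h1
    have h2 : Nat.gcd (A / 9) (B / 9) * 9 ∣ 9 := h1 ▸ hg9
    have h3 := Nat.le_of_dvd (by norm_num) h2
    have h4 : Nat.gcd (A / 9) (B / 9) ≠ 0 := by
      intro h0
      rw [h0, zero_mul] at h1
      have hA0 : A = 0 := Nat.eq_zero_of_gcd_eq_zero_left (by omega : Nat.gcd A B = 0)
      omega
    unfold Nat.Coprime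
    omega
  -- A/9 ∣ E
  have hAE : A ∣ E n k * B := by
    rw [E_mul n k]
    exact pow10_dvd ⟨m, by rw [mul_comm]⟩
  have hA9E : A / 9 ∣ E n k := by
    apply Nat.Coprime.dvd_of_dvd_mul_right hgc
    have h5 : A / 9 * 9 ∣ E n k * (B / 9) * 9 := by
      have heq : E n k * (B / 9) * 9 = E n k * B := by
        rw [mul_assoc, hB']
      rw [heq, hA']
      exact hAE
    exact (Nat.mul_dvd_mul_iff_right (by norm_num : (0:ℕ) < 9)).mp h5
  -- size bounds
  have hA1 : A / 9 ≠ 1 := by intro h; rw [h, one_mul] at hA'; omega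
  have hAltE : A / 9 < E n k := by
    have hEB := E_mul n k
    have hNm : N + m < m * N := by nlinarith
    have hp1 : (10:ℕ) ^ (N + m) ≤ 10 ^ (m * N) :=
      Nat.pow_le_pow_right (by norm_num) (by omega)
    have hmul : A * B < 10 ^ (N + m) := by
      rw [pow_add]
      have h1 : A < 10 ^ N := by omega
      have h2 : B < 10 ^ m := by omega
      exact Nat.mul_lt_mul_of_lt_of_lt h1 h2
    have hEB' : E n k * B = 10 ^ (m * N) - 1 := by
      rw [hBdef, hmdef, hNdef]
      exact E_mul n k
    have hABlt : A * B < E n k * B := by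
      have hle : (10:ℕ) ^ (N + m) ≤ 10 ^ (m*N) - 1 := by
        have h11 : (10:ℕ) ^ (N + m + 1) ≤ 10 ^ (m * N) :=
          Nat.pow_le_pow_right (by norm_num) (by omega)
        rw [pow_succ] at h11
        have hpos : 0 < (10:ℕ) ^ (N + m) := Nat.pow_pos (by norm_num)
        omega
      omega
    have hAlt : A < E n k := by
      have hBpos' : 0 < B := by omega
      exact Nat.lt_of_mul_lt_mul_right hABlt
    have : A / 9 ≤ A := Nat.div_le_self A 9
    omega
  intro hp
  rcases hp.eq_one_or_self_of_dvd (A / 9) hA9E with h | h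
  · exact hA1 h
  · omega

theorem E_not_prime (n k : ℕ) (hn : 1 < n) (hk : 0 < k)
    (h : Odd n ∨ Odd k ∨ 3 ∣ (n + 1) ∨ Nat.gcd (n + 1) (k + 1) = 1) :
    ¬ (E n k).Prime := by
  by_cases hNp : (n + 1).Prime
  · rcases h with hodd | hodd | h3 | hcop
    · exfalso
      have heven : Even (n + 1) := Odd.add_one hodd
      have := (Nat.Prime.even_iff hNp).mp heven
      omega
    · obtain ⟨s, hs⟩ := hodd
      have hNodd : Odd (n + 1) := by
        rcases Nat.Prime.eq_two_or_odd' hNp with h2 | ho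
        · omega
        · exact ho
      exact L_even_m n k s hn hNodd (by omega)
    · have := (hNp.eq_one_or_self_of_dvd 3 h3)
      have hn2 : n = 2 := by omega
      subst hn2
      exact L_n2 k hk
    · exact L_cop n k hn hk hcop
  · obtain ⟨a, ha, ha2, haN⟩ := Nat.exists_dvd_of_not_prime2 (by omega) hNp
    obtain ⟨b, hb⟩ := ha
    have hb2 : 2 ≤ b := by nlinarith
    exact L_comp n k a b ha2 hb2 hb
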